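/- Let d = 2, c > 0 and R > 0. There is a constant C = C(c,R) such that for all t > 0 and all y ∈ ℝ²: ∫_{|x| ≥ R} |x|^{−2} Γ(t, c(x−y)) dx ≤ C log(2+t)/(1+t), where Γ(t,z) = (4πt)^{−1} e^{−|z|²/(4t)}. -/

import Mathlib

open MeasureTheory Real Metric

private lemma gauss_integrable' {b : ℝ} (hb : 0 < b) :
    Integrable (fun x : EuclideanSpace ℝ (Fin 2) => Real.exp (-b * ‖x‖ ^ 2)) := by
  have h := (GaussianFourier.integrable_cexp_neg_mul_sq_norm_add
      (b := (b : ℂ)) (by simpa using hb) 0 (0 : EuclideanSpace ℝ (Fin 2))).norm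
  refine h.congr (Filter.Eventually.of_forall fun x => ?_)
  simp [Complex.norm_exp, ← Complex.ofReal_pow]

private lemma gauss_value' {b : ℝ} (hb : 0 < b) :
    ∫ x : EuclideanSpace ℝ (Fin 2), Real.exp (-b * ‖x‖ ^ 2) = π / b := by
  rw [GaussianFourier.integral_rexp_neg_mul_sq_norm hb, finrank_euclideanSpace_fin]
  rw [show ((2:ℕ):ℝ)/2 = (1:ℝ) by norm_num, Real.rpow_one]

private lemma shifted_eq {c t : ℝ} (y : EuclideanSpace ℝ (Fin 2)) (x : EuclideanSpace ℝ (Fin 2)) :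
    (4 * π * t)⁻¹ * Real.exp (-‖c • (x - y)‖ ^ 2 / (4 * t))
      = (fun z : EuclideanSpace ℝ (Fin 2) =>
          (4 * π * t)⁻¹ * Real.exp (-(c ^ 2 / (4 * t)) * ‖z‖ ^ 2)) (x - y) := by
  simp only
  congr 1
  congr 1
  rw [norm_smul, Real.norm_eq_abs, mul_pow, sq_abs]
  ring

private lemma shifted_integrable {c t : ℝ} (hc : 0 < c) (ht : 0 < t)
    (y : EuclideanSpace ℝ (Fin 2)) :
    Integrable (fun x : EuclideanSpace ℝ (Fin 2) =>
      (4 * π * t)⁻¹ * Real.exp (-‖c • (x - y)‖ ^ 2 / (4 * t))) := by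
  have hb : 0 < c ^ 2 / (4 * t) := by positivity
  have h := (((gauss_integrable' hb).const_mul ((4 * π * t)⁻¹)).comp_sub_right y)
  exact h.congr (Filter.Eventually.of_forall fun x => (shifted_eq y x).symm)

private lemma shifted_value {c t : ℝ} (hc : 0 < c) (ht : 0 < t)
    (y : EuclideanSpace ℝ (Fin 2)) :
    ∫ x : EuclideanSpace ℝ (Fin 2), (4 * π * t)⁻¹ * Real.exp (-‖c • (x - y)‖ ^ 2 / (4 * t))
      = (c ^ 2)⁻¹ := by
  have hb : 0 < c ^ 2 / (4 * t) := by positivity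
  simp only [shifted_eq y]
  rw [integral_sub_right_eq_self (fun z : EuclideanSpace ℝ (Fin 2) =>
    (4 * π * t)⁻¹ * Real.exp (-(c ^ 2 / (4 * t)) * ‖z‖ ^ 2)) y]
  rw [integral_const_mul, gauss_value' hb]
  have hπ : (π : ℝ) ≠ 0 := Real.pi_ne_zero
  field_simp

private lemma annulus_integral {R S : ℝ} (hR : 0 < R) (hRS : R ≤ S) :
    ∫ x in {x : EuclideanSpace ℝ (Fin 2) | ‖x‖ ∈ Set.Icc R S}, (‖x‖ ^ 2)⁻¹ =
      2 * π * Real.log (S / R) := by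
  have hS : 0 < S := lt_of_lt_of_le hR hRS
  have hmeas : MeasurableSet ((fun x : EuclideanSpace ℝ (Fin 2) => ‖x‖) ⁻¹' (Set.Icc R S)) :=
    measurable_norm measurableSet_Icc
  have h0 : {x : EuclideanSpace ℝ (Fin 2) | ‖x‖ ∈ Set.Icc R S}
      = (fun x : EuclideanSpace ℝ (Fin 2) => ‖x‖) ⁻¹' (Set.Icc R S) := rfl
  rw [h0, ← integral_indicator hmeas]
  have h3 : (fun x : EuclideanSpace ℝ (Fin 2) =>
        ((fun x : EuclideanSpace ℝ (Fin 2) => ‖x‖) ⁻¹' (Set.Icc R S)).indicator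
          (fun x => (‖x‖ ^ 2)⁻¹) x)
      = fun x : EuclideanSpace ℝ (Fin 2) =>
          (Set.Icc R S).indicator (fun r : ℝ => (r ^ 2)⁻¹) ‖x‖ := by
    funext x
    exact Set.indicator_comp_right (fun x : EuclideanSpace ℝ (Fin 2) => ‖x‖)
      (s := Set.Icc R S) (g := fun r : ℝ => (r ^ 2)⁻¹)
  rw [h3]
  rw [MeasureTheory.integral_fun_norm_addHaar (volume : Measure (EuclideanSpace ℝ (Fin 2)))
    (fun r : ℝ => (Set.Icc R S).indicator (fun r : ℝ => (r ^ 2)⁻¹) r)]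
  have hdim : Module.finrank ℝ (EuclideanSpace ℝ (Fin 2)) = 2 := finrank_euclideanSpace_fin
  rw [hdim]
  have hball : (volume (ball (0 : EuclideanSpace ℝ (Fin 2)) 1)).toReal = π := by
    rw [EuclideanSpace.volume_ball]
    norm_num [Real.sq_sqrt Real.pi_pos.le, Real.Gamma_two, Real.pi_pos.le]
  rw [measureReal_def, hball]
  have h4 : ∀ y : ℝ, y ^ (2 - 1) • (Set.Icc R S).indicator (fun r : ℝ => (r ^ 2)⁻¹) y
      = (Set.Icc R S).indicator (fun r : ℝ => r * (r ^ 2)⁻¹) y := by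
    intro y; by_cases h : y ∈ Set.Icc R S <;> simp [h]
  simp only [h4]
  have hsub : Set.Icc R S ⊆ Set.Ioi 0 := fun y hy => lt_of_lt_of_le hR hy.1
  rw [integral_indicator measurableSet_Icc, Measure.restrict_restrict measurableSet_Icc,
    Set.inter_eq_self_of_subset_left hsub]
  have h5 : ∫ y in Set.Icc R S, y * (y ^ 2)⁻¹ = ∫ y in Set.Icc R S, y⁻¹ := by
    refine setIntegral_congr_fun measurableSet_Icc fun y hy => ?_
    have hy0 : 0 < y := lt_of_lt_of_le hR hy.1
    field_simp
  rw [h5, integral_Icc_eq_integral_Ioc, ← intervalIntegral.integral_of_le hRS,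
    integral_inv_of_pos hR hS]
  rw [nsmul_eq_mul, smul_eq_mul]
  ring

/-- In dimension 2, `∫_{|x| ≥ R} |x|^{-2} Γ(t, c(x-y)) dx ≤ C log(2+t)/(1+t)`,
uniformly in `y`. -/
theorem stmt_14 (c R : ℝ) (hc : 0 < c) (hR : 0 < R) :
    ∃ C : ℝ, 0 < C ∧ ∀ (t : ℝ), 0 < t → ∀ y : EuclideanSpace ℝ (Fin 2),
      (∫ x in {x : EuclideanSpace ℝ (Fin 2) | R ≤ ‖x‖},
          ‖x‖ ^ (-(2:ℝ)) * ((4 * π * t)⁻¹ * Real.exp (-‖c • (x - y)‖ ^ 2 / (4 * t))))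
        ≤ C * Real.log (2 + t) / (1 + t) := by
  have hlog2 : 0 < Real.log 2 := Real.log_pos one_lt_two
  set M : ℝ := Real.log (max R 1 / R) with hMdef
  have hM : 0 ≤ M := Real.log_nonneg ((one_le_div hR).2 (le_max_left R 1))
  refine ⟨2 / (R ^ 2 * c ^ 2 * Real.log 2) + 2 / (c ^ 2 * Real.log 2) + M + 3 / 2,
    by positivity, ?_⟩
  intro t ht y
  have hrw : ∀ x : EuclideanSpace ℝ (Fin 2), ‖x‖ ^ (-(2:ℝ)) = (‖x‖ ^ 2)⁻¹ := fun x => by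
    rw [Real.rpow_neg (norm_nonneg x), Real.rpow_two]
  simp only [hrw]
  set L := Real.log (2 + t) with hLdef
  have hL2 : Real.log 2 ≤ L := Real.log_le_log (by norm_num) (by linarith)
  have hLpos : 0 < L := lt_of_lt_of_le hlog2 hL2
  set G : EuclideanSpace ℝ (Fin 2) → ℝ :=
    fun x => (4 * π * t)⁻¹ * Real.exp (-‖c • (x - y)‖ ^ 2 / (4 * t)) with hGdef
  have hGi : Integrable G := shifted_integrable hc ht y
  have hGv : ∫ x, G x = (c ^ 2)⁻¹ := shifted_value hc ht y
  have hGpos : ∀ x, 0 ≤ G x := fun x => by rw [hGdef]; positivity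
  set F : EuclideanSpace ℝ (Fin 2) → ℝ := fun x => (‖x‖ ^ 2)⁻¹ * G x with hFdef
  have hFpos : ∀ x, 0 ≤ F x := fun x =>
    mul_nonneg (by positivity) (hGpos x)
  have hA : MeasurableSet {x : EuclideanSpace ℝ (Fin 2) | R ≤ ‖x‖} :=
    (isClosed_le continuous_const continuous_norm).measurableSet
  have hFmeas : AEStronglyMeasurable F volume :=
    (((measurable_norm.pow_const 2).inv).aestronglyMeasurable).mul hGi.aestronglyMeasurable
  have hbound : ∀ (a : ℝ), 0 < a → ∀ x : EuclideanSpace ℝ (Fin 2), a ≤ ‖x‖ →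
      F x ≤ (a ^ 2)⁻¹ * G x := by
    intro a ha x hx
    refine mul_le_mul_of_nonneg_right ?_ (hGpos x)
    exact inv_anti₀ (by positivity) (pow_le_pow_left₀ ha.le hx 2)
  have hFA : IntegrableOn F {x : EuclideanSpace ℝ (Fin 2) | R ≤ ‖x‖} := by
    refine Integrable.mono' ((hGi.const_mul ((R ^ 2)⁻¹)).restrict) hFmeas.restrict ?_
    filter_upwards [ae_restrict_mem hA] with x hx
    rw [Real.norm_eq_abs, abs_of_nonneg (hFpos x)]
    exact hbound R hR x hx
  rcases le_or_gt t 1 with ht1 | ht1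
  · -- small time : crude bound
    calc ∫ x in {x : EuclideanSpace ℝ (Fin 2) | R ≤ ‖x‖}, F x
        ≤ ∫ x in {x : EuclideanSpace ℝ (Fin 2) | R ≤ ‖x‖}, (R ^ 2)⁻¹ * G x :=
          setIntegral_mono_on hFA ((hGi.const_mul _).restrict) hA (hbound R hR)
      _ ≤ ∫ x, (R ^ 2)⁻¹ * G x :=
          setIntegral_le_integral (hGi.const_mul _)
            (Filter.Eventually.of_forall fun x =>
              mul_nonneg (by positivity) (hGpos x))
      _ = (R ^ 2)⁻¹ * (c ^ 2)⁻¹ := by rw [integral_const_mul, hGv]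
      _ = 2 / (R ^ 2 * c ^ 2 * Real.log 2) * Real.log 2 / 2 := by
          field_simp [hR.ne', hc.ne', hlog2.ne']
      _ ≤ (2 / (R ^ 2 * c ^ 2 * Real.log 2) + 2 / (c ^ 2 * Real.log 2) + M + 3 / 2) * L
            / (1 + t) := by
          refine div_le_div₀ (by positivity) ?_ (by linarith) (by linarith)
          refine mul_le_mul ?_ hL2 hlog2.le (by positivity)
          have h1 : 0 ≤ 2 / (c ^ 2 * Real.log 2) := by positivity
          linarith
  · -- large time : split at S = max R √t
    set S := max R (Real.sqrt t) with hSdef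
    have hS0 : 0 < S := lt_of_lt_of_le hR (le_max_left _ _)
    have hRS : R ≤ S := le_max_left _ _
    have htS : t ≤ S ^ 2 := by
      have h1 : Real.sqrt t ≤ S := le_max_right _ _
      nlinarith [Real.sq_sqrt ht.le, Real.sqrt_nonneg t]
    have hA1 : MeasurableSet {x : EuclideanSpace ℝ (Fin 2) | ‖x‖ ∈ Set.Icc R S} :=
      measurable_norm measurableSet_Icc
    have hA2 : MeasurableSet {x : EuclideanSpace ℝ (Fin 2) | S < ‖x‖} :=
      (isOpen_lt continuous_const continuous_norm).measurableSet
    have hsub1 : {x : EuclideanSpace ℝ (Fin 2) | ‖x‖ ∈ Set.Icc R S}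
        ⊆ {x : EuclideanSpace ℝ (Fin 2) | R ≤ ‖x‖} := fun x hx => hx.1
    have hsub2 : {x : EuclideanSpace ℝ (Fin 2) | S < ‖x‖}
        ⊆ {x : EuclideanSpace ℝ (Fin 2) | R ≤ ‖x‖} := fun x hx =>
      le_of_lt (lt_of_le_of_lt hRS hx)
    have hsplit : {x : EuclideanSpace ℝ (Fin 2) | R ≤ ‖x‖}
        = {x : EuclideanSpace ℝ (Fin 2) | ‖x‖ ∈ Set.Icc R S}
          ∪ {x : EuclideanSpace ℝ (Fin 2) | S < ‖x‖} := by
      ext x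
      simp only [Set.mem_setOf_eq, Set.mem_union, Set.mem_Icc]
      constructor
      · intro h
        rcases le_or_gt ‖x‖ S with h' | h'
        · exact Or.inl ⟨h, h'⟩
        · exact Or.inr h'
      · rintro (⟨h, _⟩ | h)
        · exact h
        · linarith
    have hdisj : Disjoint {x : EuclideanSpace ℝ (Fin 2) | ‖x‖ ∈ Set.Icc R S}
        {x : EuclideanSpace ℝ (Fin 2) | S < ‖x‖} := by
      rw [Set.disjoint_left]
      rintro x ⟨_, h2⟩ h3
      exact absurd h3 (not_lt.2 h2)
    -- part 1
    have hP1 : ∫ x in {x : EuclideanSpace ℝ (Fin 2) | ‖x‖ ∈ Set.Icc R S}, F x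
        ≤ 2 * π * Real.log (S / R) * (4 * π * t)⁻¹ := by
      have hfin : volume {x : EuclideanSpace ℝ (Fin 2) | ‖x‖ ∈ Set.Icc R S} < ⊤ := by
        refine lt_of_le_of_lt (measure_mono ?_)
          (measure_closedBall_lt_top (x := (0 : EuclideanSpace ℝ (Fin 2))) (r := S))
        intro x hx
        simpa [Metric.mem_closedBall, dist_eq_norm] using hx.2
      have hint2 : IntegrableOn (fun x : EuclideanSpace ℝ (Fin 2) =>
          (‖x‖ ^ 2)⁻¹ * (4 * π * t)⁻¹) {x : EuclideanSpace ℝ (Fin 2) | ‖x‖ ∈ Set.Icc R S} := by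
        refine Integrable.mono' (g := fun _ => (R ^ 2)⁻¹ * (4 * π * t)⁻¹)
          (integrableOn_const (C := (R ^ 2)⁻¹ * (4 * π * t)⁻¹) hfin.ne)
          ((((measurable_norm.pow_const 2).inv).mul_const _).aestronglyMeasurable.restrict) ?_
        filter_upwards [ae_restrict_mem hA1] with x hx
        rw [Real.norm_eq_abs, abs_of_nonneg (by positivity)]
        refine mul_le_mul_of_nonneg_right ?_ (by positivity)
        exact inv_anti₀ (by positivity) (pow_le_pow_left₀ hR.le hx.1 2)
      calc ∫ x in {x : EuclideanSpace ℝ (Fin 2) | ‖x‖ ∈ Set.Icc R S}, F x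
          ≤ ∫ x in {x : EuclideanSpace ℝ (Fin 2) | ‖x‖ ∈ Set.Icc R S},
              (‖x‖ ^ 2)⁻¹ * (4 * π * t)⁻¹ := by
            refine setIntegral_mono_on (hFA.mono_set hsub1) hint2 hA1 fun x hx => ?_
            refine mul_le_mul_of_nonneg_left ?_ (by positivity)
            calc G x ≤ (4 * π * t)⁻¹ * 1 := by
                  refine mul_le_mul_of_nonneg_left ?_ (by positivity)
                  refine Real.exp_le_one_iff.2 ?_
                  apply div_nonpos_of_nonpos_of_nonneg
                  · simpa using sq_nonneg ‖c • (x - y)‖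
                  · positivity
              _ = (4 * π * t)⁻¹ := mul_one _
        _ = (∫ x in {x : EuclideanSpace ℝ (Fin 2) | ‖x‖ ∈ Set.Icc R S},
              (‖x‖ ^ 2)⁻¹) * (4 * π * t)⁻¹ := integral_mul_const _ _
        _ = 2 * π * Real.log (S / R) * (4 * π * t)⁻¹ := by rw [annulus_integral hR hRS]
    -- part 2
    have hP2 : ∫ x in {x : EuclideanSpace ℝ (Fin 2) | S < ‖x‖}, F x
        ≤ (S ^ 2)⁻¹ * (c ^ 2)⁻¹ := by
      calc ∫ x in {x : EuclideanSpace ℝ (Fin 2) | S < ‖x‖}, F x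
          ≤ ∫ x in {x : EuclideanSpace ℝ (Fin 2) | S < ‖x‖}, (S ^ 2)⁻¹ * G x :=
            setIntegral_mono_on (hFA.mono_set hsub2) ((hGi.const_mul _).restrict) hA2
              (fun x hx => hbound S hS0 x (le_of_lt hx))
        _ ≤ ∫ x, (S ^ 2)⁻¹ * G x :=
            setIntegral_le_integral (hGi.const_mul _)
              (Filter.Eventually.of_forall fun x =>
                mul_nonneg (by positivity) (hGpos x))
        _ = (S ^ 2)⁻¹ * (c ^ 2)⁻¹ := by rw [integral_const_mul, hGv]
    -- log bound
    have hst1 : 1 ≤ Real.sqrt t := by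
      have h := Real.sqrt_le_sqrt (le_of_lt ht1 : (1:ℝ) ≤ t)
      rwa [Real.sqrt_one] at h
    have hSle : S ≤ max R 1 * Real.sqrt t := by
      refine max_le ?_ ?_
      · calc R ≤ max R 1 := le_max_left _ _
          _ = max R 1 * 1 := (mul_one _).symm
          _ ≤ max R 1 * Real.sqrt t :=
            mul_le_mul_of_nonneg_left hst1 (le_trans hR.le (le_max_left _ _))
      · calc Real.sqrt t = 1 * Real.sqrt t := (one_mul _).symm
          _ ≤ max R 1 * Real.sqrt t :=
            mul_le_mul_of_nonneg_right (le_max_right _ _) (Real.sqrt_nonneg t)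
    have hSR : Real.log (S / R) ≤ M + L / 2 := by
      have hmax1 : 0 < max R 1 := lt_of_lt_of_le hR (le_max_left _ _)
      have hsq : 0 < Real.sqrt t := lt_of_lt_of_le one_pos hst1
      calc Real.log (S / R) ≤ Real.log (max R 1 / R * Real.sqrt t) := by
            refine Real.log_le_log (by positivity) ?_
            rw [div_mul_eq_mul_div]
            gcongr
        _ = M + Real.log (Real.sqrt t) := by
            rw [Real.log_mul (by positivity) (by positivity), hMdef]
        _ = M + Real.log t / 2 := by rw [Real.log_sqrt ht.le]
        _ ≤ M + L / 2 := by
            have := Real.log_le_log ht (by linarith : t ≤ 2 + t)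
            linarith
    have hL1 : 1 ≤ L := by
      have hlt3 : Real.exp 1 < 3 := lt_trans Real.exp_one_lt_d9 (by norm_num)
      calc (1:ℝ) = Real.log (Real.exp 1) := (Real.log_exp 1).symm
        _ ≤ L := Real.log_le_log (Real.exp_pos 1) (by linarith)
    -- combine
    rw [hsplit, setIntegral_union hdisj hA2 (hFA.mono_set hsub1) (hFA.mono_set hsub2)]
    have hπ : (π : ℝ) ≠ 0 := Real.pi_ne_zero
    have h2t : 1 + t ≤ 2 * t := by linarith
    calc (∫ x in {x : EuclideanSpace ℝ (Fin 2) | ‖x‖ ∈ Set.Icc R S}, F x)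
          + ∫ x in {x : EuclideanSpace ℝ (Fin 2) | S < ‖x‖}, F x
        ≤ 2 * π * Real.log (S / R) * (4 * π * t)⁻¹ + (S ^ 2)⁻¹ * (c ^ 2)⁻¹ :=
          add_le_add hP1 hP2
      _ ≤ 2 * π * (M + L / 2) * (4 * π * t)⁻¹ + t⁻¹ * (c ^ 2)⁻¹ := by
          refine add_le_add ?_ ?_
          · refine mul_le_mul_of_nonneg_right ?_ (by positivity)
            refine mul_le_mul_of_nonneg_left hSR (by positivity)
          · refine mul_le_mul_of_nonneg_right ?_ (by positivity)
            exact inv_anti₀ ht htS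
      _ = (M + L / 2) * (2 * t)⁻¹ + t⁻¹ * (c ^ 2)⁻¹ := by
          field_simp [hπ, ht.ne']
          ring
      _ ≤ (M + L / 2) * (1 + t)⁻¹ + 2 / c ^ 2 * (1 + t)⁻¹ := by
          refine add_le_add ?_ ?_
          · refine mul_le_mul_of_nonneg_left ?_ (by linarith)
            exact inv_anti₀ (by linarith) h2t
          · rw [inv_eq_one_div, inv_eq_one_div, inv_eq_one_div, div_mul_div_comm,
              div_mul_div_comm, div_le_div_iff₀ (by positivity) (by positivity)]
            nlinarith [mul_le_mul_of_nonneg_right h2t (sq_nonneg c), sq_nonneg c]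
      _ = (M + L / 2 + 2 / c ^ 2) * (1 + t)⁻¹ := by ring
      _ ≤ ((2 / (R ^ 2 * c ^ 2 * Real.log 2) + 2 / (c ^ 2 * Real.log 2) + M + 3 / 2) * L)
            * (1 + t)⁻¹ := by
          refine mul_le_mul_of_nonneg_right ?_ (by positivity)
          have hK2 : 2 / c ^ 2 ≤ 2 / (c ^ 2 * Real.log 2) * L := by
            have he : 2 / (c ^ 2 * Real.log 2) * Real.log 2 = 2 / c ^ 2 := by
              field_simp
            have := mul_le_mul_of_nonneg_left hL2 (by positivity :
              (0:ℝ) ≤ 2 / (c ^ 2 * Real.log 2))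
            linarith
          have hMM : M ≤ M * L := le_mul_of_one_le_right hM hL1
          have hK1 : 0 ≤ 2 / (R ^ 2 * c ^ 2 * Real.log 2) * L := by positivity
          have hexp : (2 / (R ^ 2 * c ^ 2 * Real.log 2) + 2 / (c ^ 2 * Real.log 2) + M + 3 / 2)
              * L = 2 / (R ^ 2 * c ^ 2 * Real.log 2) * L + 2 / (c ^ 2 * Real.log 2) * L
                + M * L + 3 / 2 * L := by ring
          rw [hexp]
          linarith
      _ = (2 / (R ^ 2 * c ^ 2 * Real.log 2) + 2 / (c ^ 2 * Real.log 2) + M + 3 / 2) * L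
            / (1 + t) := by ring
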